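/- (Aizenman–Lebowitz scaling) Suppose a finite square box B ⊂ ℤ² initially contains only vertices in states 1 and 2, and run threshold-2 bootstrap percolation of 2s on 1s internal to B. If S ⊂ B is a rectangle that is completely filled by 2s in the final configuration, then for every natural number j ≤ long(S), there exists a rectangle R ⊂ B whose internal dynamics completely fills R with 2s, and with long(R) ∈ [j/2, j], where long(·) denotes the length of the longest side. -/

import Mathlib

/-- The four nearest neighbors of a vertex of `ℤ²`. -/
def neighbors (v : ℤ × ℤ) : List (ℤ × ℤ) :=
  [(v.1 + 1, v.2), (v.1 - 1, v.2), (v.1, v.2 + 1), (v.1, v.2 - 1)]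

/-- One step of threshold-2 bootstrap percolation of 2s (`true`) on 1s (`false`),
internal to the finite region `B`. -/
def bstep (B : Finset (ℤ × ℤ)) (σ : ℤ × ℤ → Bool) : ℤ × ℤ → Bool := fun v =>
  σ v || (decide (v ∈ B) &&
    decide (2 ≤ (neighbors v).countP (fun w => decide (w ∈ B) && σ w)))

/-- The final configuration of the internal bootstrap dynamics on `B`. -/
def bfinal (B : Finset (ℤ × ℤ)) (σ : ℤ × ℤ → Bool) : ℤ × ℤ → Bool :=
  (bstep B)^[B.card + 1] σ

/-- Aizenman–Lebowitz scaling lemma: if a square box `B` (containing only states 1 and 2,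
encoded by `Bool`) has a rectangle `Icc a b ⊆ B` completely filled by 2s in the final
internal configuration on `B`, then for every `j ≤ long(Icc a b)` there is a rectangle
`Icc a' b' ⊆ B` internally filled by 2s with longest side in `[j/2, j]`. -/
inductive BInf (B : Finset (ℤ × ℤ)) (σ : ℤ × ℤ → Bool) : ℤ × ℤ → Prop
  | base (v : ℤ × ℤ) (h : σ v = true) : BInf B σ v
  | step (v w1 w2 : ℤ × ℤ) (hv : v ∈ B) (h1 : w1 ∈ neighbors v) (h2 : w2 ∈ neighbors v)
      (hne : w1 ≠ w2) (hB1 : w1 ∈ B) (hB2 : w2 ∈ B)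
      (i1 : BInf B σ w1) (i2 : BInf B σ w2) : BInf B σ v

lemma neighbors_nodup (v : ℤ × ℤ) : (neighbors v).Nodup := by
  simp [neighbors, Prod.ext_iff]
  omega

lemma countP_two {α : Type*} {l : List α} {p : α → Bool} (h : l.Nodup) {a b : α}
    (ha : a ∈ l) (hb : b ∈ l) (hab : a ≠ b) (hpa : p a = true) (hpb : p b = true) :
    2 ≤ l.countP p := by
  induction l with
  | nil => simp at ha
  | cons x t ih =>
    rcases List.nodup_cons.1 h with ⟨hx, ht⟩
    rcases List.mem_cons.1 ha with rfl | ha'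
    · have hb' : b ∈ t := by
        rcases List.mem_cons.1 hb with rfl | h'
        · exact absurd rfl hab
        · exact h'
      have : 0 < t.countP p := List.countP_pos_iff.2 ⟨b, hb', hpb⟩
      rw [List.countP_cons]
      simp only [hpa, if_true]
      omega
    · rcases List.mem_cons.1 hb with rfl | hb'
      · have : 0 < t.countP p := List.countP_pos_iff.2 ⟨a, ha', hpa⟩
        rw [List.countP_cons]
        simp only [hpb, if_true]
        omega
      · have := ih ht ha' hb'
        rw [List.countP_cons]
        omega

lemma countP_two_rev {α : Type*} {l : List α} {p : α → Bool} (h : l.Nodup)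
    (h2 : 2 ≤ l.countP p) : ∃ a ∈ l, ∃ b ∈ l, a ≠ b ∧ p a = true ∧ p b = true := by
  induction l with
  | nil => simp at h2
  | cons x t ih =>
    rcases List.nodup_cons.1 h with ⟨hx, ht⟩
    rw [List.countP_cons] at h2
    by_cases hpx : p x = true
    · have h1 : 1 ≤ t.countP p := by simp only [hpx, if_true] at h2; omega
      obtain ⟨b, hb, hpb⟩ := List.countP_pos_iff.1 (by omega : 0 < t.countP p)
      exact ⟨x, List.mem_cons_self, b, List.mem_cons_of_mem _ hb,
        fun h' => hx (h' ▸ hb), hpx, hpb⟩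
    · have h2' : 2 ≤ t.countP p := by simp only [if_neg hpx] at h2; omega
      obtain ⟨a, ha, b, hb, hab, hpa, hpb⟩ := ih ht h2'
      exact ⟨a, List.mem_cons_of_mem _ ha, b, List.mem_cons_of_mem _ hb, hab, hpa, hpb⟩

lemma bstep_base {B : Finset (ℤ × ℤ)} {σ : ℤ × ℤ → Bool} {v : ℤ × ℤ} (h : σ v = true) :
    bstep B σ v = true := by simp [bstep, h]

lemma bstep_mono {B : Finset (ℤ × ℤ)} {σ τ : ℤ × ℤ → Bool}
    (h : ∀ v, σ v = true → τ v = true) (v : ℤ × ℤ) (hv : bstep B σ v = true) :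
    bstep B τ v = true := by
  simp only [bstep, Bool.or_eq_true, Bool.and_eq_true, decide_eq_true_eq] at hv ⊢
  rcases hv with hv | ⟨hvB, hc⟩
  · exact Or.inl (h v hv)
  · refine Or.inr ⟨hvB, le_trans hc (List.countP_mono_left ?_)⟩
    intro w hw hpw
    simp only [Bool.and_eq_true, decide_eq_true_eq] at hpw ⊢
    exact ⟨hpw.1, h w hpw.2⟩

lemma iter_mono {B : Finset (ℤ × ℤ)} (k : ℕ) {σ τ : ℤ × ℤ → Bool}
    (h : ∀ v, σ v = true → τ v = true) (v : ℤ × ℤ)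
    (hv : (bstep B)^[k] σ v = true) : (bstep B)^[k] τ v = true := by
  induction k generalizing σ τ v with
  | zero => exact h v hv
  | succ k ih =>
    rw [Function.iterate_succ_apply] at hv ⊢
    exact ih (fun w => bstep_mono h w) v hv

lemma iter_le {B : Finset (ℤ × ℤ)} {k k' : ℕ} (hk : k ≤ k') {σ : ℤ × ℤ → Bool} {v : ℤ × ℤ}
    (hv : (bstep B)^[k] σ v = true) : (bstep B)^[k'] σ v = true := by
  induction k' with
  | zero =>
    have : k = 0 := by omega
    subst this; exact hv
  | succ m ih =>
    rcases Nat.lt_or_ge k (m+1) with h' | h'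
    · have hm := ih (by omega)
      rw [Function.iterate_succ_apply']
      exact bstep_base hm
    · have : k = m + 1 := by omega
      subst this; exact hv

lemma iter_outside {B : Finset (ℤ × ℤ)} (k : ℕ) {σ : ℤ × ℤ → Bool} {v : ℤ × ℤ}
    (hv : v ∉ B) : (bstep B)^[k] σ v = σ v := by
  induction k with
  | zero => rfl
  | succ m ih =>
    rw [Function.iterate_succ_apply']
    simp [bstep, hv, ih]

lemma bstep_outside {B : Finset (ℤ × ℤ)} {σ : ℤ × ℤ → Bool} {v : ℤ × ℤ} (hv : v ∉ B) :
    bstep B σ v = σ v := by simp [bstep, hv]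

lemma exists_fixed (B : Finset (ℤ × ℤ)) (σ : ℤ × ℤ → Bool) :
    ∃ k ≤ B.card, bstep B ((bstep B)^[k] σ) = (bstep B)^[k] σ := by
  by_contra hcon
  push_neg at hcon
  set g : ℕ → Finset (ℤ × ℤ) := fun k => B.filter (fun v => (bstep B)^[k] σ v = true) with hg
  have hsub : ∀ k, g k ⊆ g (k+1) := by
    intro k v hv
    rw [hg, Finset.mem_filter] at hv ⊢
    exact ⟨hv.1, iter_le (Nat.le_succ k) hv.2⟩
  have hstrict : ∀ k ≤ B.card, g k ⊂ g (k+1) := by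
    intro k hk
    refine Finset.ssubset_iff_of_subset (hsub k) |>.2 ?_
    have hne := hcon k hk
    have : ∃ v, bstep B ((bstep B)^[k] σ) v ≠ (bstep B)^[k] σ v := by
      by_contra h
      push_neg at h
      exact hne (funext h)
    obtain ⟨v, hv⟩ := this
    have hvB : v ∈ B := by
      by_contra hvB
      exact hv (bstep_outside hvB)
    have h1 : bstep B ((bstep B)^[k] σ) v = true := by
      cases h' : bstep B ((bstep B)^[k] σ) v with
      | true => rfl
      | false =>
        exfalso
        cases h'' : (bstep B)^[k] σ v with
        | false => exact hv (h' ▸ h'' ▸ rfl)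
        | true => simp [bstep_base h''] at h'
    have h0 : (bstep B)^[k] σ v = false := by
      cases h'' : (bstep B)^[k] σ v with
      | false => rfl
      | true => exact absurd (h1.trans h''.symm) hv
    refine ⟨v, ?_, ?_⟩
    · rw [hg, Finset.mem_filter]
      rw [Function.iterate_succ_apply']
      exact ⟨hvB, h1⟩
    · rw [hg, Finset.mem_filter]
      simp [h0]
  have hcard : ∀ k ≤ B.card + 1, k ≤ (g k).card := by
    intro k
    induction k with
    | zero => omega
    | succ m ih =>
      intro hm
      have h1 := ih (by omega)
      have h2 := Finset.card_lt_card (hstrict m (by omega))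
      omega
  have := hcard (B.card + 1) le_rfl
  have : (g (B.card + 1)).card ≤ B.card := Finset.card_le_card (Finset.filter_subset _ _)
  omega

lemma iter_bfinal {B : Finset (ℤ × ℤ)} {σ : ℤ × ℤ → Bool} {v : ℤ × ℤ} (k : ℕ)
    (hv : (bstep B)^[k] σ v = true) : bfinal B σ v = true := by
  obtain ⟨k0, hk0, hfix⟩ := exists_fixed B σ
  have hstable : ∀ m, k0 ≤ m → (bstep B)^[m] σ = (bstep B)^[k0] σ := by
    intro m hm
    obtain ⟨i, rfl⟩ := Nat.exists_eq_add_of_le hm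
    induction i with
    | zero => rfl
    | succ i ih =>
      have : k0 + (i+1) = (k0 + i) + 1 := rfl
      rw [this, Function.iterate_succ_apply', ih (by omega), hfix]
  rcases Nat.lt_or_ge k (B.card + 1) with h | h
  · exact iter_le (by omega) hv
  · rw [bfinal, hstable (B.card+1) (by omega)]
    rw [hstable k (by omega)] at hv
    exact hv

lemma binf_iter {B : Finset (ℤ × ℤ)} {σ : ℤ × ℤ → Bool} {v : ℤ × ℤ}
    (h : BInf B σ v) : ∃ k, (bstep B)^[k] σ v = true := by
  induction h with
  | base v h => exact ⟨0, h⟩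
  | step v w1 w2 hv h1 h2 hne hB1 hB2 i1 i2 ih1 ih2 =>
    obtain ⟨k1, hk1⟩ := ih1
    obtain ⟨k2, hk2⟩ := ih2
    refine ⟨max k1 k2 + 1, ?_⟩
    rw [Function.iterate_succ_apply']
    have hw1 : (bstep B)^[max k1 k2] σ w1 = true := iter_le (le_max_left _ _) hk1
    have hw2 : (bstep B)^[max k1 k2] σ w2 = true := iter_le (le_max_right _ _) hk2
    simp only [bstep, Bool.or_eq_true, Bool.and_eq_true, decide_eq_true_eq]
    refine Or.inr ⟨hv, countP_two (neighbors_nodup v) h1 h2 hne ?_ ?_⟩ <;>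
      simp_all

lemma iter_binf {B : Finset (ℤ × ℤ)} {σ : ℤ × ℤ → Bool} (k : ℕ) (v : ℤ × ℤ)
    (h : (bstep B)^[k] σ v = true) : BInf B σ v := by
  induction k generalizing v with
  | zero => exact BInf.base v h
  | succ m ih =>
    rw [Function.iterate_succ_apply'] at h
    simp only [bstep, Bool.or_eq_true, Bool.and_eq_true, decide_eq_true_eq] at h
    rcases h with h | ⟨hvB, hc⟩
    · exact ih v h
    · obtain ⟨w1, hw1, w2, hw2, hne, hp1, hp2⟩ := countP_two_rev (neighbors_nodup v) hc
      simp only [Bool.and_eq_true, decide_eq_true_eq] at hp1 hp2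
      exact BInf.step v w1 w2 hvB hw1 hw2 hne hp1.1 hp2.1 (ih w1 hp1.2) (ih w2 hp2.2)

lemma bfinal_iff_binf {B : Finset (ℤ × ℤ)} {σ : ℤ × ℤ → Bool} {v : ℤ × ℤ} :
    bfinal B σ v = true ↔ BInf B σ v := by
  constructor
  · intro h
    exact iter_binf (B.card + 1) v h
  · intro h
    obtain ⟨k, hk⟩ := binf_iter h
    exact iter_bfinal k hk

lemma BInf.mono {B B' : Finset (ℤ × ℤ)} {σ : ℤ × ℤ → Bool} {v : ℤ × ℤ}
    (h : BInf B σ v) (hBB : B ⊆ B') : BInf B' σ v := by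
  induction h with
  | base v h => exact BInf.base v h
  | step v w1 w2 hv h1 h2 hne hB1 hB2 i1 i2 ih1 ih2 =>
    exact BInf.step v w1 w2 (hBB hv) h1 h2 hne (hBB hB1) (hBB hB2) ih1 ih2

lemma memIcc {p q v : ℤ × ℤ} :
    v ∈ Finset.Icc p q ↔ p.1 ≤ v.1 ∧ v.1 ≤ q.1 ∧ p.2 ≤ v.2 ∧ v.2 ≤ q.2 := by
  simp [Finset.mem_Icc, Prod.le_def]; tauto

lemma col_fill {B : Finset (ℤ × ℤ)} {σ : ℤ × ℤ → Bool} {x y0 ylo yhi dx : ℤ}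
    (hdx : dx = 1 ∨ dx = -1) (h0 : BInf B σ (x, y0)) (hy1 : ylo ≤ y0) (hy2 : y0 ≤ yhi)
    (hmemB : ∀ y, ylo ≤ y → y ≤ yhi → (x, y) ∈ B)
    (hside : ∀ y, ylo ≤ y → y ≤ yhi → (x + dx, y) ∈ B ∧ BInf B σ (x + dx, y)) :
    ∀ y, ylo ≤ y → y ≤ yhi → BInf B σ (x, y) := by
  have hup : ∀ y, y0 ≤ y → (y ≤ yhi → BInf B σ (x, y)) := by
    refine Int.le_induction (fun _ => h0) ?_
    intro n hn ih hn1
    have ih' := ih (by omega)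
    obtain ⟨hsB, hsI⟩ := hside (n+1) (by omega) hn1
    refine BInf.step (x, n+1) (x, n) (x+dx, n+1) (hmemB (n+1) (by omega) hn1) ?_ ?_ ?_
      (hmemB n (by omega) (by omega)) hsB ih' hsI
    · simp [neighbors]
    · rcases hdx with rfl | rfl <;> simp [neighbors] <;> try omega
    · intro h; rw [Prod.ext_iff] at h; omega
  have hdown : ∀ y, y ≤ y0 → (ylo ≤ y → BInf B σ (x, y)) := by
    refine Int.le_induction_down (fun _ => h0) ?_
    intro n hn ih hn1
    have ih' := ih (by omega)
    obtain ⟨hsB, hsI⟩ := hside (n-1) hn1 (by omega)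
    refine BInf.step (x, n-1) (x, n) (x+dx, n-1) (hmemB (n-1) hn1 (by omega)) ?_ ?_ ?_
      (hmemB n (by omega) (by omega)) hsB ih' hsI
    · simp [neighbors]
    · rcases hdx with rfl | rfl <;> simp [neighbors] <;> try omega
    · intro h; rw [Prod.ext_iff] at h; omega
  intro y h1 h2
  rcases le_total y y0 with h | h
  · exact hdown y h h1
  · exact hup y h h2

lemma row_fill {B : Finset (ℤ × ℤ)} {σ : ℤ × ℤ → Bool} {y x0 xlo xhi dy : ℤ}
    (hdy : dy = 1 ∨ dy = -1) (h0 : BInf B σ (x0, y)) (hx1 : xlo ≤ x0) (hx2 : x0 ≤ xhi)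
    (hmemB : ∀ x, xlo ≤ x → x ≤ xhi → (x, y) ∈ B)
    (hside : ∀ x, xlo ≤ x → x ≤ xhi → (x, y + dy) ∈ B ∧ BInf B σ (x, y + dy)) :
    ∀ x, xlo ≤ x → x ≤ xhi → BInf B σ (x, y) := by
  have hup : ∀ x, x0 ≤ x → (x ≤ xhi → BInf B σ (x, y)) := by
    refine Int.le_induction (fun _ => h0) ?_
    intro n hn ih hn1
    have ih' := ih (by omega)
    obtain ⟨hsB, hsI⟩ := hside (n+1) (by omega) hn1
    refine BInf.step (n+1, y) (n, y) (n+1, y+dy) (hmemB (n+1) (by omega) hn1) ?_ ?_ ?_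
      (hmemB n (by omega) (by omega)) hsB ih' hsI
    · simp [neighbors]
    · rcases hdy with rfl | rfl <;> simp [neighbors] <;> try omega
    · intro h; rw [Prod.ext_iff] at h; omega
  have hdown : ∀ x, x ≤ x0 → (xlo ≤ x → BInf B σ (x, y)) := by
    refine Int.le_induction_down (fun _ => h0) ?_
    intro n hn ih hn1
    have ih' := ih (by omega)
    obtain ⟨hsB, hsI⟩ := hside (n-1) hn1 (by omega)
    refine BInf.step (n-1, y) (n, y) (n-1, y+dy) (hmemB (n-1) hn1 (by omega)) ?_ ?_ ?_
      (hmemB n (by omega) (by omega)) hsB ih' hsI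
    · simp [neighbors]
    · rcases hdy with rfl | rfl <;> simp [neighbors] <;> try omega
    · intro h; rw [Prod.ext_iff] at h; omega
  intro xx h1 h2
  rcases le_total xx x0 with h | h
  · exact hdown xx h h1
  · exact hup xx h h2

lemma memBox {a b c d v : ℤ × ℤ} :
    v ∈ Finset.Icc (a ⊓ b) (c ⊔ d) ↔
      min a.1 b.1 ≤ v.1 ∧ v.1 ≤ max c.1 d.1 ∧ min a.2 b.2 ≤ v.2 ∧ v.2 ≤ max c.2 d.2 := by
  simp [Finset.mem_Icc, Prod.le_def]; tauto

lemma grow {B : Finset (ℤ × ℤ)} {σ : ℤ × ℤ → Bool} {p q u : ℤ × ℤ} (hpq : p ≤ q)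
    (hR : ∀ z ∈ Finset.Icc p q, BInf B σ z) (hu : BInf B σ u)
    (hbox : Finset.Icc (p ⊓ u) (q ⊔ u) ⊆ B)
    (hadj : u ∈ Finset.Icc p q ∨ ∃ w ∈ Finset.Icc p q, w ∈ neighbors u) :
    ∀ z ∈ Finset.Icc (p ⊓ u) (q ⊔ u), BInf B σ z := by
  have hpq' : p.1 ≤ q.1 ∧ p.2 ≤ q.2 := hpq
  by_cases hin : u ∈ Finset.Icc p q
  · have h1 : p ⊓ u = p := inf_eq_left.2 (Finset.mem_Icc.1 hin).1
    have h2 : q ⊔ u = q := sup_eq_left.2 (Finset.mem_Icc.1 hin).2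
    rw [h1, h2]
    exact hR
  · have hadj' : ∃ w ∈ Finset.Icc p q, w ∈ neighbors u := by tauto
    obtain ⟨w, hw, hnb⟩ := hadj'
    rw [memIcc] at hw hin
    push_neg at hin
    have hu' : BInf B σ (u.1, u.2) := by rwa [Prod.mk.eta]
    simp only [neighbors, List.mem_cons, List.mem_singleton, List.not_mem_nil, or_false] at hnb
    rcases hnb with rfl | rfl | rfl | rfl
    · -- w = (u.1+1, u.2), u is to the left: u.1 = p.1 - 1
      simp only at hw
      have hu1 : u.1 = p.1 - 1 := by omega
      have hcol := col_fill (B := B) (σ := σ) (x := u.1) (y0 := u.2) (ylo := p.2)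
        (yhi := q.2) (dx := 1) (Or.inl rfl) hu' (by omega) (by omega)
        (fun y h1 h2 => hbox (memBox.2 (by constructor <;> omega)))
        (fun y h1 h2 => ⟨hbox (memBox.2 (by constructor <;> omega)),
          hR (u.1 + 1, y) (memIcc.2 (by omega))⟩)
      intro z hz
      rw [memBox] at hz
      rcases lt_or_ge z.1 p.1 with h | h
      · have : BInf B σ (z.1, z.2) := by
          have hz1 : z.1 = u.1 := by omega
          rw [hz1]
          exact hcol z.2 (by omega) (by omega)
        rwa [Prod.mk.eta] at this
      · exact hR z (memIcc.2 (by omega))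
    · -- w = (u.1-1, u.2), u is to the right: u.1 = q.1 + 1
      simp only at hw
      have hu1 : u.1 = q.1 + 1 := by omega
      have hcol := col_fill (B := B) (σ := σ) (x := u.1) (y0 := u.2) (ylo := p.2)
        (yhi := q.2) (dx := -1) (Or.inr rfl) hu' (by omega) (by omega)
        (fun y h1 h2 => hbox (memBox.2 (by constructor <;> omega)))
        (fun y h1 h2 => ⟨hbox (memBox.2 (by constructor <;> omega)),
          hR (u.1 + -1, y) (memIcc.2 (by omega))⟩)
      intro z hz
      rw [memBox] at hz
      rcases lt_or_ge q.1 z.1 with h | h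
      · have : BInf B σ (z.1, z.2) := by
          have hz1 : z.1 = u.1 := by omega
          rw [hz1]
          exact hcol z.2 (by omega) (by omega)
        rwa [Prod.mk.eta] at this
      · exact hR z (memIcc.2 (by omega))
    · -- w = (u.1, u.2+1), u is below: u.2 = p.2 - 1
      simp only at hw
      have hu2 : u.2 = p.2 - 1 := by omega
      have hrow := row_fill (B := B) (σ := σ) (y := u.2) (x0 := u.1) (xlo := p.1)
        (xhi := q.1) (dy := 1) (Or.inl rfl) hu' (by omega) (by omega)
        (fun x h1 h2 => hbox (memBox.2 (by constructor <;> omega)))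
        (fun x h1 h2 => ⟨hbox (memBox.2 (by constructor <;> omega)),
          hR (x, u.2 + 1) (memIcc.2 (by omega))⟩)
      intro z hz
      rw [memBox] at hz
      rcases lt_or_ge z.2 p.2 with h | h
      · have : BInf B σ (z.1, z.2) := by
          have hz2 : z.2 = u.2 := by omega
          rw [hz2]
          exact hrow z.1 (by omega) (by omega)
        rwa [Prod.mk.eta] at this
      · exact hR z (memIcc.2 (by omega))
    · -- w = (u.1, u.2-1), u is above: u.2 = q.2 + 1
      simp only at hw
      have hu2 : u.2 = q.2 + 1 := by omega
      have hrow := row_fill (B := B) (σ := σ) (y := u.2) (x0 := u.1) (xlo := p.1)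
        (xhi := q.1) (dy := -1) (Or.inr rfl) hu' (by omega) (by omega)
        (fun x h1 h2 => hbox (memBox.2 (by constructor <;> omega)))
        (fun x h1 h2 => ⟨hbox (memBox.2 (by constructor <;> omega)),
          hR (x, u.2 + -1) (memIcc.2 (by omega))⟩)
      intro z hz
      rw [memBox] at hz
      rcases lt_or_ge q.2 z.2 with h | h
      · have : BInf B σ (z.1, z.2) := by
          have hz2 : z.2 = u.2 := by omega
          rw [hz2]
          exact hrow z.1 (by omega) (by omega)
        rwa [Prod.mk.eta] at this
      · exact hR z (memIcc.2 (by omega))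

lemma rect_walk {p q s t u z : ℤ × ℤ} (hu : u ∈ Finset.Icc s t) (huR : u ∈ Finset.Icc p q)
    (hz : z ∈ Finset.Icc s t) (hzR : z ∉ Finset.Icc p q) :
    ∃ u2 ∈ Finset.Icc s t, u2 ∉ Finset.Icc p q ∧ ∃ w ∈ Finset.Icc p q, w ∈ neighbors u2 := by
  rw [memIcc] at hu huR hz hzR
  push_neg at hzR
  by_cases h1 : z.1 < p.1
  · exact ⟨(p.1 - 1, u.2), memIcc.2 (by simp; omega), by rw [memIcc]; simp; try omega
      ,
      (p.1, u.2), memIcc.2 (by simp; omega), by simp [neighbors]⟩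
  by_cases h2 : q.1 < z.1
  · exact ⟨(q.1 + 1, u.2), memIcc.2 (by simp; omega), by rw [memIcc]; simp; try omega
      ,
      (q.1, u.2), memIcc.2 (by simp; omega), by simp [neighbors]⟩
  by_cases h3 : z.2 < p.2
  · exact ⟨(u.1, p.2 - 1), memIcc.2 (by simp; omega), by rw [memIcc]; simp; try omega
      ,
      (u.1, p.2), memIcc.2 (by simp; omega), by simp [neighbors]⟩
  · have h4 : q.2 < z.2 := by omega
    exact ⟨(u.1, q.2 + 1), memIcc.2 (by simp; omega), by rw [memIcc]; simp; try omega
      ,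
      (u.1, q.2), memIcc.2 (by simp; omega), by simp [neighbors]⟩

lemma engulf : ∀ (m : ℕ) {B : Finset (ℤ × ℤ)} {σ : ℤ × ℤ → Bool} {p q s t : ℤ × ℤ},
    B.card ≤ (Finset.Icc p q).card + m → p ≤ q → s ≤ t →
    Finset.Icc p q ⊆ B → Finset.Icc s t ⊆ B → Finset.Icc (p ⊓ s) (q ⊔ t) ⊆ B →
    (∀ z ∈ Finset.Icc p q, BInf B σ z) → (∀ z ∈ Finset.Icc s t, BInf B σ z) →
    (∃ u ∈ Finset.Icc s t, u ∈ Finset.Icc p q ∨ ∃ w ∈ Finset.Icc p q, w ∈ neighbors u) →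
    ∀ z ∈ Finset.Icc (p ⊓ s) (q ⊔ t), BInf B σ z := by
  intro m
  induction m with
  | zero =>
    intro B σ p q s t hcard hpq hst hRB hTB hbig hRI hTI hconn
    by_cases hsub : p ≤ s ∧ t ≤ q
    · have h1 : p ⊓ s = p := inf_eq_left.2 hsub.1
      have h2 : q ⊔ t = q := sup_eq_left.2 hsub.2
      rw [h1, h2]
      exact hRI
    · exfalso
      have hBeq : B = Finset.Icc p q := (Finset.eq_of_subset_of_card_le hRB (by omega)).symm
      have hz : ∃ z ∈ Finset.Icc s t, z ∉ Finset.Icc p q := by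
        rcases not_and_or.1 hsub with h | h
        · exact ⟨s, Finset.mem_Icc.2 ⟨le_rfl, hst⟩, fun hc => h (Finset.mem_Icc.1 hc).1⟩
        · exact ⟨t, Finset.mem_Icc.2 ⟨hst, le_rfl⟩, fun hc => h (Finset.mem_Icc.1 hc).2⟩
      obtain ⟨z, hzT, hzR⟩ := hz
      exact hzR (hBeq ▸ hTB hzT)
  | succ m ih =>
    intro B σ p q s t hcard hpq hst hRB hTB hbig hRI hTI hconn
    by_cases hsub : p ≤ s ∧ t ≤ q
    · have h1 : p ⊓ s = p := inf_eq_left.2 hsub.1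
      have h2 : q ⊔ t = q := sup_eq_left.2 hsub.2
      rw [h1, h2]
      exact hRI
    · -- there is a point of T outside R
      have hz : ∃ z ∈ Finset.Icc s t, z ∉ Finset.Icc p q := by
        rcases not_and_or.1 hsub with h | h
        · exact ⟨s, Finset.mem_Icc.2 ⟨le_rfl, hst⟩, fun hc => h (Finset.mem_Icc.1 hc).1⟩
        · exact ⟨t, Finset.mem_Icc.2 ⟨hst, le_rfl⟩, fun hc => h (Finset.mem_Icc.1 hc).2⟩
      obtain ⟨z, hzT, hzR⟩ := hz
      obtain ⟨u, huT, hucase⟩ := hconn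
      -- produce u' ∈ T \ R adjacent to R
      have hu' : ∃ u' ∈ Finset.Icc s t, u' ∉ Finset.Icc p q ∧
          (u' ∈ Finset.Icc p q ∨ ∃ w ∈ Finset.Icc p q, w ∈ neighbors u') := by
        by_cases huR : u ∈ Finset.Icc p q
        · obtain ⟨u2, h1, h2, h3⟩ := rect_walk huT huR hzT hzR
          exact ⟨u2, h1, h2, Or.inr h3⟩
        · refine ⟨u, huT, huR, hucase⟩
      obtain ⟨u', hu'T, hu'R, hu'adj⟩ := hu'
      have hs_le : s ≤ u' ∧ u' ≤ t := Finset.mem_Icc.1 hu'T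
      -- the grown rectangle
      have hbox' : Finset.Icc (p ⊓ u') (q ⊔ u') ⊆ Finset.Icc (p ⊓ s) (q ⊔ t) := by
        apply Finset.Icc_subset_Icc
        · exact inf_le_inf_left p hs_le.1
        · exact sup_le_sup_left hs_le.2 q
      have hgrow := grow hpq hRI (hTI u' hu'T) (fun z hz => hbig (hbox' hz)) hu'adj
      -- key Icc equalities
      have he1 : (p ⊓ u') ⊓ s = p ⊓ s := by
        rw [inf_assoc, inf_eq_right.2 hs_le.1]
      have he2 : (q ⊔ u') ⊔ t = q ⊔ t := by
        rw [sup_assoc, sup_eq_right.2 hs_le.2]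
      -- cardinality step
      have hmono : Finset.Icc p q ⊆ Finset.Icc (p ⊓ u') (q ⊔ u') :=
        Finset.Icc_subset_Icc inf_le_left le_sup_left
      have hu'mem : u' ∈ Finset.Icc (p ⊓ u') (q ⊔ u') :=
        Finset.mem_Icc.2 ⟨inf_le_right, le_sup_right⟩
      have hcard' : (Finset.Icc p q).card < (Finset.Icc (p ⊓ u') (q ⊔ u')).card :=
        Finset.card_lt_card (Finset.ssubset_iff_of_subset hmono |>.2 ⟨u', hu'mem, hu'R⟩)
      have := ih (B := B) (σ := σ) (p := p ⊓ u') (q := q ⊔ u') (s := s) (t := t)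
        (by omega) (le_trans inf_le_left (le_trans hpq le_sup_left)) hst
        (fun z hz => hbig (hbox' hz)) hTB (by rw [he1, he2]; exact hbig)
        hgrow hTI ⟨u', hu'T, Or.inl hu'mem⟩
      rw [he1, he2] at this
      exact this

lemma neighbors_symm {v w : ℤ × ℤ} (h : w ∈ neighbors v) : v ∈ neighbors w := by
  simp only [neighbors, List.mem_cons, List.not_mem_nil, or_false, Prod.ext_iff] at h ⊢
  omega

lemma v_in_box {v w1 w2 : ℤ × ℤ} (h1 : w1 ∈ neighbors v) (h2 : w2 ∈ neighbors v)
    (hne : w1 ≠ w2) : min w1.1 w2.1 ≤ v.1 ∧ v.1 ≤ max w1.1 w2.1 ∧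
      min w1.2 w2.2 ≤ v.2 ∧ v.2 ≤ max w1.2 w2.2 := by
  simp only [neighbors, List.mem_cons, List.not_mem_nil, or_false] at h1 h2
  rcases h1 with rfl | rfl | rfl | rfl <;> rcases h2 with rfl | rfl | rfl | rfl <;>
    first
      | exact absurd rfl hne
      | (refine ⟨?_, ?_, ?_, ?_⟩ <;> simp <;> omega)

def Spanned (σ : ℤ × ℤ → Bool) (p q : ℤ × ℤ) : Prop :=
  ∀ z ∈ Finset.Icc p q, BInf (Finset.Icc p q) σ z

def Near (v p q : ℤ × ℤ) : Prop :=
  v ∈ Finset.Icc p q ∨ ∃ w ∈ Finset.Icc p q, w ∈ neighbors v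

lemma merge_spanned {σ : ℤ × ℤ → Bool} {p1 q1 p2 q2 v : ℤ × ℤ}
    (h1 : p1 ≤ q1) (h2 : p2 ≤ q2) (hs1 : Spanned σ p1 q1) (hs2 : Spanned σ p2 q2)
    (hn1 : Near v p1 q1) (hn2 : Near v p2 q2) :
    Spanned σ (p1 ⊓ p2) (q1 ⊔ q2) := by
  set Bx := Finset.Icc (p1 ⊓ p2) (q1 ⊔ q2) with hBx
  have hR1 : Finset.Icc p1 q1 ⊆ Bx := Finset.Icc_subset_Icc inf_le_left le_sup_left
  have hR2 : Finset.Icc p2 q2 ⊆ Bx := Finset.Icc_subset_Icc inf_le_right le_sup_right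
  have hI1 : ∀ z ∈ Finset.Icc p1 q1, BInf Bx σ z := fun z hz => (hs1 z hz).mono hR1
  have hI2 : ∀ z ∈ Finset.Icc p2 q2, BInf Bx σ z := fun z hz => (hs2 z hz).mono hR2
  have main : (∃ u ∈ Finset.Icc p2 q2,
      u ∈ Finset.Icc p1 q1 ∨ ∃ w ∈ Finset.Icc p1 q1, w ∈ neighbors u) →
      Spanned σ (p1 ⊓ p2) (q1 ⊔ q2) := by
    intro hconn
    intro z hz
    exact engulf Bx.card (by omega) h1 h2 hR1 hR2 (le_refl _) hI1 hI2 hconn z hz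
  rcases hn1 with hv1 | ⟨w1, hw1, hw1n⟩
  · rcases hn2 with hv2 | ⟨w2, hw2, hw2n⟩
    · exact main ⟨v, hv2, Or.inl hv1⟩
    · exact main ⟨w2, hw2, Or.inr ⟨v, hv1, neighbors_symm hw2n⟩⟩
  · rcases hn2 with hv2 | ⟨w2, hw2, hw2n⟩
    · exact main ⟨v, hv2, Or.inr ⟨w1, hw1, hw1n⟩⟩
    · by_cases hww : w1 = w2
      · exact main ⟨w2, hw2, Or.inl (hww ▸ hw1)⟩
      · -- genuine case: v is between the two rectangles
        have hvbox := v_in_box hw1n hw2n hww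
        have hw1' := memIcc.1 hw1
        have hw2' := memIcc.1 hw2
        have hvBx : v ∈ Bx := by
          rw [hBx, memBox]
          omega
        have hvinf : BInf Bx σ v := by
          refine BInf.step v w1 w2 hvBx hw1n hw2n hww (hR1 hw1) (hR2 hw2)
            (hI1 w1 hw1) (hI2 w2 hw2)
        -- grow R1 by v
        have hb1 : Finset.Icc (p1 ⊓ v) (q1 ⊔ v) ⊆ Bx := by
          apply Finset.Icc_subset_Icc
          · refine le_inf inf_le_left ?_
            rw [hBx, memBox] at hvBx
            rw [Prod.le_def]
            constructor <;> simp <;> omega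
          · refine sup_le le_sup_left ?_
            rw [hBx, memBox] at hvBx
            rw [Prod.le_def]
            constructor <;> simp <;> omega
        have hgrow := grow h1 hI1 hvinf hb1 (Or.inr ⟨w1, hw1, hw1n⟩)
        -- engulf R2 from the grown rectangle
        have hpv : p1 ⊓ v ≤ q1 ⊔ v := le_trans inf_le_left (le_trans h1 le_sup_left)
        have he1 : (p1 ⊓ v) ⊓ p2 = p1 ⊓ p2 := by
          rw [inf_right_comm]
          refine inf_eq_left.2 ?_
          rw [hBx, memBox] at hvBx
          rw [Prod.le_def]
          constructor <;> simp <;> omega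
        have he2 : (q1 ⊔ v) ⊔ q2 = q1 ⊔ q2 := by
          rw [sup_right_comm]
          refine sup_eq_left.2 ?_
          rw [hBx, memBox] at hvBx
          rw [Prod.le_def]
          constructor <;> simp <;> omega
        have hvmem : v ∈ Finset.Icc (p1 ⊓ v) (q1 ⊔ v) :=
          Finset.mem_Icc.2 ⟨inf_le_right, le_sup_right⟩
        have := engulf (B := Bx) (σ := σ) Bx.card (by omega) hpv h2
          hb1 hR2 (by rw [he1, he2])
          hgrow hI2 ⟨w2, hw2, Or.inr ⟨v, hvmem, neighbors_symm hw2n⟩⟩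
        rw [he1, he2] at this
        exact this

def longr (p q : ℤ × ℤ) : ℤ := max (q.1 - p.1 + 1) (q.2 - p.2 + 1)

lemma two_nbrs_in {p q v w1 w2 : ℤ × ℤ} (h1 : w1 ∈ neighbors v) (h2 : w2 ∈ neighbors v)
    (hne : w1 ≠ w2) (m1 : w1 ∈ Finset.Icc p q) (m2 : w2 ∈ Finset.Icc p q) :
    v ∈ Finset.Icc p q := by
  have hb := v_in_box h1 h2 hne
  rw [memIcc] at m1 m2 ⊢
  omega

lemma near_bounds {v p q : ℤ × ℤ} (h : Near v p q) :
    p.1 ≤ v.1 + 1 ∧ v.1 - 1 ≤ q.1 ∧ p.2 ≤ v.2 + 1 ∧ v.2 - 1 ≤ q.2 := by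
  rcases h with h | ⟨w, hw, hwn⟩
  · rw [memIcc] at h; omega
  · rw [memIcc] at hw
    simp only [neighbors, List.mem_cons, List.not_mem_nil, or_false] at hwn
    rcases hwn with rfl | rfl | rfl | rfl <;> simp at hw <;> omega

lemma box_subset {c d p1 q1 p2 q2 : ℤ × ℤ} (hpq1 : p1 ≤ q1) (hpq2 : p2 ≤ q2)
    (h1 : Finset.Icc p1 q1 ⊆ Finset.Icc c d) (h2 : Finset.Icc p2 q2 ⊆ Finset.Icc c d) :
    Finset.Icc (p1 ⊓ p2) (q1 ⊔ q2) ⊆ Finset.Icc c d := by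
  have m1 := memIcc.1 (h1 (Finset.mem_Icc.2 ⟨le_rfl, hpq1⟩))
  have m2 := memIcc.1 (h1 (Finset.mem_Icc.2 ⟨hpq1, le_rfl⟩))
  have m3 := memIcc.1 (h2 (Finset.mem_Icc.2 ⟨le_rfl, hpq2⟩))
  have m4 := memIcc.1 (h2 (Finset.mem_Icc.2 ⟨hpq2, le_rfl⟩))
  intro z hz
  rw [memBox] at hz
  rw [memIcc]
  omega

lemma process (B : Finset (ℤ × ℤ)) (σ : ℤ × ℤ → Bool) (c d : ℤ × ℤ)
    (hBcd : B = Finset.Icc c d) (k : ℤ) (hk : 1 ≤ k) :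
    ∀ (m : ℕ) (C : Finset ((ℤ × ℤ) × (ℤ × ℤ))), C.card ≤ m →
    (∀ r ∈ C, r.1 ≤ r.2 ∧ Finset.Icc r.1 r.2 ⊆ B ∧ Spanned σ r.1 r.2 ∧ longr r.1 r.2 < k) →
    (∃ p q : ℤ × ℤ, p ≤ q ∧ Finset.Icc p q ⊆ B ∧ Spanned σ p q ∧
        k ≤ longr p q ∧ longr p q ≤ 2 * k - 1) ∨
    (∃ C' : Finset ((ℤ × ℤ) × (ℤ × ℤ)),
       (∀ r ∈ C', r.1 ≤ r.2 ∧ Finset.Icc r.1 r.2 ⊆ B ∧ Spanned σ r.1 r.2 ∧ longr r.1 r.2 < k) ∧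
       C.biUnion (fun r => Finset.Icc r.1 r.2) ⊆ C'.biUnion (fun r => Finset.Icc r.1 r.2) ∧
       (∀ r1 ∈ C', ∀ r2 ∈ C', ∀ v : ℤ × ℤ, Near v r1.1 r1.2 → Near v r2.1 r2.2 → r1 = r2)) := by
  intro m
  induction m with
  | zero =>
    intro C hcard hinv
    right
    refine ⟨C, hinv, le_refl _, ?_⟩
    intro r1 hr1 r2 hr2 v _ _
    exact absurd (Finset.card_pos.2 ⟨r1, hr1⟩) (by omega)
  | succ m ih =>
    intro C hcard hinv
    by_cases hterm : ∀ r1 ∈ C, ∀ r2 ∈ C, ∀ v : ℤ × ℤ, Near v r1.1 r1.2 → Near v r2.1 r2.2 → r1 = r2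
    · exact Or.inr ⟨C, hinv, le_refl _, hterm⟩
    · push_neg at hterm
      obtain ⟨r1, hr1, r2, hr2, v, hn1, hn2, hne⟩ := hterm
      obtain ⟨hle1, hB1, hsp1, hl1⟩ := hinv r1 hr1
      obtain ⟨hle2, hB2, hsp2, hl2⟩ := hinv r2 hr2
      set P := r1.1 ⊓ r2.1 with hP
      set Q := r1.2 ⊔ r2.2 with hQ
      have hPQ : P ≤ Q := le_trans inf_le_left (le_trans hle1 le_sup_left)
      have hspan : Spanned σ P Q := merge_spanned hle1 hle2 hsp1 hsp2 hn1 hn2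
      have hsubB : Finset.Icc P Q ⊆ B := by
        rw [hBcd] at hB1 hB2 ⊢
        exact box_subset hle1 hle2 hB1 hB2
      have hnb1 := near_bounds hn1
      have hnb2 := near_bounds hn2
      have hlong : longr P Q ≤ 2 * k - 1 := by
        rw [hP, hQ]
        unfold longr at hl1 hl2 ⊢
        simp only [Prod.fst_inf, Prod.snd_inf, Prod.fst_sup, Prod.snd_sup] at *
        omega
      by_cases hbig : k ≤ longr P Q
      · exact Or.inl ⟨P, Q, hPQ, hsubB, hspan, hbig, hlong⟩
      · push_neg at hbig
        set C2 : Finset ((ℤ × ℤ) × (ℤ × ℤ)) := insert (P, Q) ((C.erase r1).erase r2) with hC2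
        have hable : ∀ r ∈ C2, r ∈ C ∨ r = (P, Q) := by
          intro r hr
          rw [hC2, Finset.mem_insert] at hr
          rcases hr with rfl | hr
          · exact Or.inr rfl
          · exact Or.inl (Finset.mem_of_mem_erase (Finset.mem_of_mem_erase hr))
        have hinv2 : ∀ r ∈ C2, r.1 ≤ r.2 ∧ Finset.Icc r.1 r.2 ⊆ B ∧ Spanned σ r.1 r.2 ∧
            longr r.1 r.2 < k := by
          intro r hr
          rcases hable r hr with hr' | rfl
          · exact hinv r hr'
          · exact ⟨hPQ, hsubB, hspan, hbig⟩
        have hcard2 : C2.card ≤ m := by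
          have h2' : r2 ∈ C.erase r1 := Finset.mem_erase.2 ⟨fun h => absurd h.symm hne, hr2⟩
          have e1 : (C.erase r1).card = C.card - 1 := Finset.card_erase_of_mem hr1
          have e2 : ((C.erase r1).erase r2).card = (C.erase r1).card - 1 :=
            Finset.card_erase_of_mem h2'
          have e3 := Finset.card_insert_le (P, Q) ((C.erase r1).erase r2)
          have hc2 : 2 ≤ C.card := Finset.one_lt_card.2 ⟨r1, hr1, r2, hr2, hne⟩
          rw [hC2]
          omega
        have hcov : C.biUnion (fun r => Finset.Icc r.1 r.2) ⊆
            C2.biUnion (fun r => Finset.Icc r.1 r.2) := by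
          intro z hz
          rw [Finset.mem_biUnion] at hz ⊢
          obtain ⟨r, hr, hzr⟩ := hz
          by_cases h1 : r = r1
          · exact ⟨(P, Q), Finset.mem_insert_self _ _,
              Finset.Icc_subset_Icc inf_le_left le_sup_left (h1 ▸ hzr)⟩
          by_cases h2 : r = r2
          · exact ⟨(P, Q), Finset.mem_insert_self _ _,
              Finset.Icc_subset_Icc inf_le_right le_sup_right (h2 ▸ hzr)⟩
          · exact ⟨r, Finset.mem_insert_of_mem (Finset.mem_erase.2 ⟨h2,
              Finset.mem_erase.2 ⟨h1, hr⟩⟩), hzr⟩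
        rcases ih C2 hcard2 hinv2 with h | ⟨C', hi1, hi2, hi3⟩
        · exact Or.inl h
        · exact Or.inr ⟨C', hi1, le_trans hcov hi2, hi3⟩

lemma binf_exists_seed {B : Finset (ℤ × ℤ)} {σ : ℤ × ℤ → Bool} {v : ℤ × ℤ}
    (h : BInf B σ v) (hv : v ∈ B) : ∃ x ∈ B, σ x = true := by
  induction h with
  | base v h => exact ⟨v, hv, h⟩
  | step v w1 w2 hvB h1 h2 hne hB1 hB2 i1 i2 ih1 ih2 => exact ih1 hB1

theorem stmt12 (n : ℕ) (hn : 1 ≤ n) (c : ℤ × ℤ) (B : Finset (ℤ × ℤ))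
    (hB : B = Finset.Icc c (c.1 + (n : ℤ) - 1, c.2 + (n : ℤ) - 1))
    (σ : ℤ × ℤ → Bool)
    (a b : ℤ × ℤ) (hab : a ≤ b) (hS : Finset.Icc a b ⊆ B)
    (hfill : ∀ v ∈ Finset.Icc a b, bfinal B σ v = true)
    (j : ℕ) (hj : 1 ≤ j) (hjlong : (j : ℤ) ≤ max (b.1 - a.1 + 1) (b.2 - a.2 + 1)) :
    ∃ a' b' : ℤ × ℤ, a' ≤ b' ∧ Finset.Icc a' b' ⊆ B ∧
      (j : ℤ) ≤ 2 * max (b'.1 - a'.1 + 1) (b'.2 - a'.2 + 1) ∧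
      max (b'.1 - a'.1 + 1) (b'.2 - a'.2 + 1) ≤ (j : ℤ) ∧
      ∀ v ∈ Finset.Icc a' b', bfinal (Finset.Icc a' b') σ v = true := by
  have haB : a ∈ B := hS (Finset.mem_Icc.2 ⟨le_rfl, hab⟩)
  have hainf : BInf B σ a := bfinal_iff_binf.1 (hfill a (Finset.mem_Icc.2 ⟨le_rfl, hab⟩))
  rcases le_or_gt j 2 with hj2 | hj3
  · -- small case: a single seed suffices
    obtain ⟨x, hxB, hxσ⟩ := binf_exists_seed hainf haB
    refine ⟨x, x, le_rfl, ?_, ?_, ?_, ?_⟩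
    · intro z hz
      rw [Finset.mem_Icc] at hz
      have : z = x := le_antisymm hz.2 hz.1
      exact this ▸ hxB
    · simp; omega
    · simp; omega
    · intro v hv
      rw [Finset.mem_Icc] at hv
      have : v = x := le_antisymm hv.2 hv.1
      subst this
      exact bfinal_iff_binf.2 (BInf.base v hxσ)
  · -- main case
    set K : ℕ := (j + 1) / 2 with hK
    have hK2 : 2 ≤ K := by omega
    set A : Finset (ℤ × ℤ) := B.filter (fun v => σ v = true) with hA
    set C0 : Finset ((ℤ × ℤ) × (ℤ × ℤ)) := A.image (fun x => (x, x)) with hC0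
    have hinv0 : ∀ r ∈ C0, r.1 ≤ r.2 ∧ Finset.Icc r.1 r.2 ⊆ B ∧ Spanned σ r.1 r.2 ∧
        longr r.1 r.2 < (K : ℤ) := by
      intro r hr
      rw [hC0, Finset.mem_image] at hr
      obtain ⟨x, hx, rfl⟩ := hr
      rw [hA, Finset.mem_filter] at hx
      refine ⟨le_rfl, ?_, ?_, ?_⟩
      · intro z hz
        rw [Finset.mem_Icc] at hz
        exact (le_antisymm hz.2 hz.1) ▸ hx.1
      · intro z hz
        rw [Finset.mem_Icc] at hz
        have : z = x := le_antisymm hz.2 hz.1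
        subst this
        exact BInf.base z hx.2
      · unfold longr; simp; omega
    rcases process B σ c (c.1 + (n : ℤ) - 1, c.2 + (n : ℤ) - 1) hB (K : ℤ) (by omega)
        C0.card C0 le_rfl hinv0 with ⟨p, q, hpq, hPB, hsp, hk1, hk2⟩ | ⟨C', hi1, hi2, hi3⟩
    · -- found the window rectangle
      refine ⟨p, q, hpq, hPB, ?_, ?_, ?_⟩
      · unfold longr at hk1; omega
      · unfold longr at hk2; omega
      · intro v hv
        exact bfinal_iff_binf.2 (hsp v hv)
    · -- terminal collection: derive a contradiction
      exfalso
      have hcov : ∀ v, BInf B σ v → v ∈ B →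
          v ∈ C'.biUnion (fun r => Finset.Icc r.1 r.2) := by
        intro v hv
        induction hv with
        | base v h =>
          intro hvB
          apply hi2
          rw [hC0, Finset.mem_biUnion]
          refine ⟨(v, v), Finset.mem_image.2 ⟨v, Finset.mem_filter.2 ⟨hvB, h⟩, rfl⟩, ?_⟩
          exact Finset.mem_Icc.2 ⟨le_rfl, le_rfl⟩
        | step v w1 w2 hvB h1 h2 hne hB1 hB2 i1 i2 ih1 ih2 =>
          intro _
          obtain ⟨s1, hs1, hw1⟩ := Finset.mem_biUnion.1 (ih1 hB1)
          obtain ⟨s2, hs2, hw2⟩ := Finset.mem_biUnion.1 (ih2 hB2)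
          have heq : s1 = s2 := hi3 s1 hs1 s2 hs2 v (Or.inr ⟨w1, hw1, h1⟩)
            (Or.inr ⟨w2, hw2, h2⟩)
          rw [Finset.mem_biUnion]
          exact ⟨s1, hs1, two_nbrs_in h1 h2 hne hw1 (heq ▸ hw2)⟩
      obtain ⟨r, hr, har⟩ := Finset.mem_biUnion.1 (hcov a hainf haB)
      have hSr : ∀ z ∈ Finset.Icc a b, z ∈ Finset.Icc r.1 r.2 := by
        by_contra hcon
        push_neg at hcon
        obtain ⟨z, hzS, hzr⟩ := hcon
        obtain ⟨u2, hu2S, hu2r, w, hwr, hwn⟩ :=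
          rect_walk (Finset.mem_Icc.2 ⟨le_rfl, hab⟩) har hzS hzr
        have hu2B : u2 ∈ B := hS hu2S
        have hu2inf : BInf B σ u2 := bfinal_iff_binf.1 (hfill u2 hu2S)
        obtain ⟨r2, hr2, hur2⟩ := Finset.mem_biUnion.1 (hcov u2 hu2inf hu2B)
        have : r2 = r := hi3 r2 hr2 r hr u2 (Or.inl hur2) (Or.inr ⟨w, hwr, hwn⟩)
        exact hu2r (this ▸ hur2)
      have hlongr : (K : ℤ) ≤ longr r.1 r.2 := by
        have h1 := memIcc.1 (hSr a (Finset.mem_Icc.2 ⟨le_rfl, hab⟩))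
        have h2 := memIcc.1 (hSr b (Finset.mem_Icc.2 ⟨hab, le_rfl⟩))
        unfold longr
        have : (K : ℤ) ≤ (j : ℤ) := by push_cast; omega
        simp only [le_max_iff] at hjlong ⊢
        omega
      have := (hi1 r hr).2.2.2
      omega
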